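/- The 2-form ω on 𝔤₃ is nondegenerate; the operator P satisfies P∘P = Id and ω(PX,PY) = −ω(X,Y) for all X,Y; the (+1)-eigenspace of P is span{e₃,e₄,e₅} and the (−1)-eigenspace is span{e₁,e₂,e₆}; neither eigenspace is closed under the Lie bracket of 𝔤₃; and the bilinear form g(X,Y) = ω(X,PY) is symmetric, nondegenerate, and of signature (3,3) (some basis diagonalizes g with exactly three positive and three negative diagonal entries). -/

import Mathlib

noncomputable section

open LinearMap Module

abbrev V : Type := Fin 6 → ℝ

def e (i : Fin 6) : V := Pi.single i 1

private lemma cons_val_five {α : Type*} (a b c d e f : α) :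
    (![a, b, c, d, e, f] : Fin 6 → α) 5 = f := rfl

private lemma cons_val_two6 {α : Type*} (a b c d e f : α) :
    (![a, b, c, d, e, f] : Fin 6 → α) 2 = c := rfl

private lemma cons_val_three6 {α : Type*} (a b c d e f : α) :
    (![a, b, c, d, e, f] : Fin 6 → α) 3 = d := rfl

private lemma cons_val_four6 {α : Type*} (a b c d e f : α) :
    (![a, b, c, d, e, f] : Fin 6 → α) 4 = e := rfl

set_option maxHeartbeats 2000000 in
theorem stmt_14
    (a13 a14 a15 a23 a24 a46 : ℝ)
    (ha15 : a15 ≠ 0) (ha23 : a23 ≠ 0) (ha46 : a46 ≠ 0)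
    (B : V →ₗ[ℝ] V →ₗ[ℝ] V)
    (hBanti : ∀ X Y, B X Y = - B Y X)
    (hB1 : B (e 0) (e 1) = e 3)
    (hB2 : B (e 0) (e 2) = e 4)
    (hB3 : B (e 0) (e 3) = e 5)
    (hB4 : B (e 2) (e 4) = e 5)
    (hBz : ∀ i j : Fin 6, i < j → (i, j) ∉ ({(0,1),(0,2),(0,3),(2,4)} : Set (Fin 6 × Fin 6)) → B (e i) (e j) = 0)
    (ω : V →ₗ[ℝ] V →ₗ[ℝ] ℝ)
    (hωalt : ∀ X, ω X X = 0)
    (hω1 : ω (e 0) (e 2) = a13)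
    (hω2 : ω (e 0) (e 3) = a14)
    (hω3 : ω (e 0) (e 4) = a15)
    (hω4 : ω (e 1) (e 2) = a23)
    (hω5 : ω (e 1) (e 3) = a24)
    (hω6 : ω (e 3) (e 5) = a46)
    (hωz : ∀ i j : Fin 6, i < j → (i, j) ∉ ({(0,2),(0,3),(0,4),(1,2),(1,3),(3,5)} : Set (Fin 6 × Fin 6)) → ω (e i) (e j) = 0)
    (P : Module.End ℝ V)
    (hP1 : P (e 0) = -e 0)
    (hP2 : P (e 1) = -e 1)
    (hP3 : P (e 2) = e 2)
    (hP4 : P (e 3) = e 3)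
    (hP5 : P (e 4) = e 4)
    (hP6 : P (e 5) = -e 5)
    (g : V →ₗ[ℝ] V →ₗ[ℝ] ℝ)
    (hg : ∀ X Y, g X Y = ω X (P Y))
    (Ep Em : Submodule ℝ V)
    (hEp : Ep = Submodule.span ℝ ({(e 2 : V), (e 3 : V), (e 4 : V)} : Set V))
    (hEm : Em = Submodule.span ℝ ({(e 0 : V), (e 1 : V), (e 5 : V)} : Set V)) :
    (∀ X : V, (∀ Y, ω X Y = 0) → X = 0) ∧
    P ∘ₗ P = LinearMap.id ∧
    (∀ X Y, ω (P X) (P Y) = - ω X Y) ∧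
    Module.End.eigenspace P 1 = Ep ∧
    Module.End.eigenspace P (-1) = Em ∧
    ¬ (∀ X ∈ Ep, ∀ Y ∈ Ep, B X Y ∈ Ep) ∧
    ¬ (∀ X ∈ Em, ∀ Y ∈ Em, B X Y ∈ Em) ∧
    (∀ X Y, g X Y = g Y X) ∧
    (∀ X : V, (∀ Y, g X Y = 0) → X = 0) ∧
    (∃ b : Basis (Fin 6) ℝ V,
      (∀ i j, i ≠ j → g (b i) (b j) = 0) ∧
      Nat.card {i : Fin 6 // 0 < g (b i) (b i)} = 3 ∧
      Nat.card {i : Fin 6 // g (b i) (b i) < 0} = 3) := by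
  -- basic facts
  have hskew : ∀ X Y, ω Y X = - ω X Y := by
    intro X Y
    have h := hωalt (X + Y)
    simp only [map_add, LinearMap.add_apply, hωalt] at h
    linarith
  have hcoords : ∀ X : V, X = ∑ i, X i • e i := by
    intro X; funext j; simp [e, Pi.single_apply, Finset.sum_apply]
  have h01 : ω (e 0) (e 1) = 0 := hωz 0 1 (by decide) (by decide)
  have h05 : ω (e 0) (e 5) = 0 := hωz 0 5 (by decide) (by decide)
  have h10 : ω (e 1) (e 0) = 0 := by rw [hskew, h01, neg_zero]
  have h14 : ω (e 1) (e 4) = 0 := hωz 1 4 (by decide) (by decide)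
  have h15 : ω (e 1) (e 5) = 0 := hωz 1 5 (by decide) (by decide)
  have h20 : ω (e 2) (e 0) = -a13 := by rw [hskew, hω1]
  have h21 : ω (e 2) (e 1) = -a23 := by rw [hskew, hω4]
  have h23 : ω (e 2) (e 3) = 0 := hωz 2 3 (by decide) (by decide)
  have h24 : ω (e 2) (e 4) = 0 := hωz 2 4 (by decide) (by decide)
  have h25 : ω (e 2) (e 5) = 0 := hωz 2 5 (by decide) (by decide)
  have h30 : ω (e 3) (e 0) = -a14 := by rw [hskew, hω2]
  have h31 : ω (e 3) (e 1) = -a24 := by rw [hskew, hω5]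
  have h32 : ω (e 3) (e 2) = 0 := by rw [hskew, h23, neg_zero]
  have h34 : ω (e 3) (e 4) = 0 := hωz 3 4 (by decide) (by decide)
  have h40 : ω (e 4) (e 0) = -a15 := by rw [hskew, hω3]
  have h41 : ω (e 4) (e 1) = 0 := by rw [hskew, h14, neg_zero]
  have h42 : ω (e 4) (e 2) = 0 := by rw [hskew, h24, neg_zero]
  have h43 : ω (e 4) (e 3) = 0 := by rw [hskew, h34, neg_zero]
  have h45 : ω (e 4) (e 5) = 0 := hωz 4 5 (by decide) (by decide)
  have h50 : ω (e 5) (e 0) = 0 := by rw [hskew, h05, neg_zero]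
  have h51 : ω (e 5) (e 1) = 0 := by rw [hskew, h15, neg_zero]
  have h52 : ω (e 5) (e 2) = 0 := by rw [hskew, h25, neg_zero]
  have h53 : ω (e 5) (e 3) = -a46 := by rw [hskew, hω6]
  have h54 : ω (e 5) (e 4) = 0 := by rw [hskew, h45, neg_zero]
  have hωXY : ∀ X Y : V, ω X Y =
      a13*(X 0*Y 2 - X 2*Y 0) + a14*(X 0*Y 3 - X 3*Y 0) + a15*(X 0*Y 4 - X 4*Y 0)
      + a23*(X 1*Y 2 - X 2*Y 1) + a24*(X 1*Y 3 - X 3*Y 1) + a46*(X 3*Y 5 - X 5*Y 3) := by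
    intro X Y
    conv_lhs => rw [hcoords X, hcoords Y]
    simp only [map_add, map_sum, map_smul, LinearMap.add_apply, LinearMap.sum_apply,
      LinearMap.smul_apply, smul_eq_mul, Fin.sum_univ_six, hωalt, hω1, hω2, hω3, hω4, hω5, hω6,
      h01, h05, h10, h14, h15, h20, h21, h23, h24, h25, h30, h31, h32, h34,
      h40, h41, h42, h43, h45, h50, h51, h52, h53, h54]
    ring
  -- components of P
  have hPX : ∀ (X : V) (j : Fin 6), P X j = (if j = 0 ∨ j = 1 ∨ j = 5 then (-1:ℝ) else 1) * X j := by
    intro X j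
    conv_lhs => rw [hcoords X]
    rw [map_sum, Fin.sum_univ_six]
    simp only [map_smul, hP1, hP2, hP3, hP4, hP5, hP6]
    fin_cases j <;> simp [e, Pi.single_apply]
  have hgXY : ∀ X Y : V, g X Y =
      a13*(X 0*Y 2 + X 2*Y 0) + a14*(X 0*Y 3 + X 3*Y 0) + a15*(X 0*Y 4 + X 4*Y 0)
      + a23*(X 1*Y 2 + X 2*Y 1) + a24*(X 1*Y 3 + X 3*Y 1) - a46*(X 3*Y 5 + X 5*Y 3) := by
    intro X Y
    rw [hg X Y, hωXY X (P Y)]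
    simp only [hPX]
    norm_num (config := { decide := true })
    ring
  -- the pieces
  refine ⟨?_, ?_, ?_, ?_, ?_, ?_, ?_, ?_, ?_, ?_⟩
  · -- ω nondegenerate
    intro X hX
    have E4 := hX (e 4); rw [hωXY] at E4; simp [e, Pi.single_apply] at E4
    have E5 := hX (e 5); rw [hωXY] at E5; simp [e, Pi.single_apply] at E5
    have E2 := hX (e 2); rw [hωXY] at E2; simp [e, Pi.single_apply] at E2
    have E3 := hX (e 3); rw [hωXY] at E3; simp [e, Pi.single_apply] at E3
    have E1 := hX (e 1); rw [hωXY] at E1; simp [e, Pi.single_apply] at E1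
    have E0 := hX (e 0); rw [hωXY] at E0; simp [e, Pi.single_apply] at E0
    have hX0 : X 0 = 0 := E4.resolve_left ha15
    have hX3 : X 3 = 0 := E5.resolve_left ha46
    have hX1 : X 1 = 0 := by
      have h' : a23 * X 1 = 0 := by rw [hX0] at E2; linarith
      exact (mul_eq_zero.mp h').resolve_left ha23
    have hX5 : X 5 = 0 := by
      have h' : a46 * X 5 = 0 := by rw [hX0, hX1] at E3; linarith
      exact (mul_eq_zero.mp h').resolve_left ha46
    have hX2 : X 2 = 0 := by
      have h' : a23 * X 2 = 0 := by rw [hX3] at E1; linarith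
      exact (mul_eq_zero.mp h').resolve_left ha23
    have hX4 : X 4 = 0 := by
      have h' : a15 * X 4 = 0 := by rw [hX2, hX3] at E0; linarith
      exact (mul_eq_zero.mp h').resolve_left ha15
    funext j
    fin_cases j <;> first | exact hX0 | exact hX1 | exact hX2 | exact hX3 | exact hX4 | exact hX5
  · -- P ∘ P = id
    apply LinearMap.ext
    intro X
    funext j
    have h1 := hPX (P X) j
    have h2 := hPX X j
    rw [LinearMap.comp_apply, h1, h2, LinearMap.id_apply]
    fin_cases j <;> norm_num (config := { decide := true })
  · -- ω (PX) (PY) = -ω X Y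
    intro X Y
    rw [hωXY (P X) (P Y), hωXY X Y, hPX, hPX, hPX, hPX, hPX, hPX, hPX, hPX, hPX, hPX, hPX, hPX]
    norm_num (config := { decide := true })
    ring
  · -- eigenspace 1 = Ep
    apply le_antisymm
    · intro X hX
      rw [Module.End.mem_eigenspace_iff, one_smul] at hX
      have c0 : X 0 = 0 := by
        have h' := congrFun hX 0; rw [hPX] at h'
        norm_num (config := { decide := true }) at h'; linarith
      have c1 : X 1 = 0 := by
        have h' := congrFun hX 1; rw [hPX] at h'
        norm_num (config := { decide := true }) at h'; linarith
      have c5 : X 5 = 0 := by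
        have h' := congrFun hX 5; rw [hPX] at h'
        norm_num (config := { decide := true }) at h'; linarith
      rw [hEp]
      have hXd : X = X 2 • e 2 + X 3 • e 3 + X 4 • e 4 := by
        funext j
        fin_cases j <;> simp [e, Pi.single_apply] <;> first | exact c0 | exact c1 | exact c5
      rw [hXd]
      refine add_mem (add_mem ?_ ?_) ?_ <;>
        exact Submodule.smul_mem _ _ (Submodule.subset_span (by simp))
    · rw [hEp, Submodule.span_le]
      intro x hx
      simp only [Set.mem_insert_iff, Set.mem_singleton_iff] at hx
      rcases hx with rfl | rfl | rfl <;>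
        · rw [SetLike.mem_coe, Module.End.mem_eigenspace_iff, one_smul]
          first | exact hP3 | exact hP4 | exact hP5
  · -- eigenspace -1 = Em
    apply le_antisymm
    · intro X hX
      rw [Module.End.mem_eigenspace_iff] at hX
      have c2 : X 2 = 0 := by
        have h' := congrFun hX 2; rw [hPX] at h'
        norm_num (config := { decide := true }) at h'
        linarith
      have c3 : X 3 = 0 := by
        have h' := congrFun hX 3; rw [hPX] at h'
        norm_num (config := { decide := true }) at h'
        linarith
      have c4 : X 4 = 0 := by
        have h' := congrFun hX 4; rw [hPX] at h'
        norm_num (config := { decide := true }) at h'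
        linarith
      rw [hEm]
      have hXd : X = X 0 • e 0 + X 1 • e 1 + X 5 • e 5 := by
        funext j
        fin_cases j <;> simp [e, Pi.single_apply] <;> first | exact c2 | exact c3 | exact c4
      rw [hXd]
      refine add_mem (add_mem ?_ ?_) ?_ <;>
        exact Submodule.smul_mem _ _ (Submodule.subset_span (by simp))
    · rw [hEm, Submodule.span_le]
      intro x hx
      simp only [Set.mem_insert_iff, Set.mem_singleton_iff] at hx
      rcases hx with rfl | rfl | rfl <;>
        · rw [SetLike.mem_coe, Module.End.mem_eigenspace_iff]
          first
            | (rw [hP1]; module)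
            | (rw [hP2]; module)
            | (rw [hP6]; module)
  · -- Ep not closed
    intro h
    have h5 := h (e 2) (by rw [hEp]; exact Submodule.subset_span (by simp))
      (e 4) (by rw [hEp]; exact Submodule.subset_span (by simp))
    rw [hB4, hEp] at h5
    have hle : Submodule.span ℝ ({(e 2 : V), e 3, e 4} : Set V) ≤
        LinearMap.ker (LinearMap.proj (R := ℝ) (5 : Fin 6)) := by
      rw [Submodule.span_le]
      intro x hx
      simp only [Set.mem_insert_iff, Set.mem_singleton_iff] at hx
      rcases hx with rfl | rfl | rfl <;>
        simp [LinearMap.mem_ker, e, Pi.single_apply]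
    have := hle h5
    simp [LinearMap.mem_ker, e, Pi.single_apply] at this
  · -- Em not closed
    intro h
    have h3 := h (e 0) (by rw [hEm]; exact Submodule.subset_span (by simp))
      (e 1) (by rw [hEm]; exact Submodule.subset_span (by simp))
    rw [hB1, hEm] at h3
    have hle : Submodule.span ℝ ({(e 0 : V), e 1, e 5} : Set V) ≤
        LinearMap.ker (LinearMap.proj (R := ℝ) (3 : Fin 6)) := by
      rw [Submodule.span_le]
      intro x hx
      simp only [Set.mem_insert_iff, Set.mem_singleton_iff] at hx
      rcases hx with rfl | rfl | rfl <;>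
        simp [LinearMap.mem_ker, e, Pi.single_apply]
    have := hle h3
    simp [LinearMap.mem_ker, e, Pi.single_apply] at this
  · -- g symmetric
    intro X Y
    rw [hg X Y, hg Y X, hωXY X (P Y), hωXY Y (P X), hPX, hPX, hPX, hPX, hPX, hPX, hPX, hPX, hPX, hPX, hPX, hPX]
    norm_num (config := { decide := true })
    ring
  · -- g nondegenerate
    intro X hX
    have E4 := hX (e 4); rw [hgXY] at E4; simp [e, Pi.single_apply] at E4
    have E5 := hX (e 5); rw [hgXY] at E5; simp [e, Pi.single_apply] at E5
    have E2 := hX (e 2); rw [hgXY] at E2; simp [e, Pi.single_apply] at E2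
    have E3 := hX (e 3); rw [hgXY] at E3; simp [e, Pi.single_apply] at E3
    have E1 := hX (e 1); rw [hgXY] at E1; simp [e, Pi.single_apply] at E1
    have E0 := hX (e 0); rw [hgXY] at E0; simp [e, Pi.single_apply] at E0
    have hX0 : X 0 = 0 := E4.resolve_left ha15
    have hX3 : X 3 = 0 := E5.resolve_left ha46
    have hX1 : X 1 = 0 := by
      have h' : a23 * X 1 = 0 := by rw [hX0] at E2; linarith
      exact (mul_eq_zero.mp h').resolve_left ha23
    have hX5 : X 5 = 0 := by
      have h' : a46 * X 5 = 0 := by rw [hX0, hX1] at E3; linarith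
      exact (mul_eq_zero.mp h').resolve_left ha46
    have hX2 : X 2 = 0 := by
      have h' : a23 * X 2 = 0 := by rw [hX3] at E1; linarith
      exact (mul_eq_zero.mp h').resolve_left ha23
    have hX4 : X 4 = 0 := by
      have h' : a15 * X 4 = 0 := by rw [hX2, hX3] at E0; linarith
      exact (mul_eq_zero.mp h').resolve_left ha15
    funext j
    fin_cases j <;> first | exact hX0 | exact hX1 | exact hX2 | exact hX3 | exact hX4 | exact hX5
  · -- basis and signature
    clear h01 h05 h10 h14 h15 h20 h21 h23 h24 h25 h30 h31 h32 h34 h40 h41 h42 h43 h45 h50 h51 h52 h53 h54 hω1 hω2 hω3 hω4 hω5 hω6 hωz hωalt hskew hB1 hB2 hB3 hB4 hBz hBanti hP1 hP2 hP3 hP4 hP5 hP6 hEp hEm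
    set γ : ℝ := (a14*a23 - a13*a24)/(a15*a23*a46) with hγ
    set v : Fin 6 → V := ![
      ![0, 1/a23, 1, 0, 0, a24/(a23*a46)],
      ![0, 0, 0, 1, 0, -(1/a46)],
      ![1/a15, -(a13/(a15*a23)), 0, 0, 1, γ],
      ![0, -(1/a23), 1, 0, 0, -(a24/(a23*a46))],
      ![0, 0, 0, 1, 0, 1/a46],
      ![-(1/a15), a13/(a15*a23), 0, 0, 1, -γ]] with hv
    have hmat : ∀ i j : Fin 6, g (v i) (v j) =
        if i = j then ![(2:ℝ),2,2,-2,-2,-2] i else 0 := by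
      intro i j
      rw [hgXY]
      fin_cases i <;> fin_cases j <;>
        · norm_num (config := { decide := true }) [hv, hγ, cons_val_five, cons_val_two6, cons_val_three6, cons_val_four6]
          try field_simp
          try ring
    have hli : LinearIndependent ℝ v := by
      rw [Fintype.linearIndependent_iff]
      intro c hc i
      have h : (g (∑ j, c j • v j)) (v i) = 0 := by rw [hc]; simp
      simp only [Fin.sum_univ_six, map_add, map_smul, LinearMap.add_apply, LinearMap.smul_apply,
        smul_eq_mul, hmat] at h
      fin_cases i <;>
        · norm_num (config := { decide := true }) [cons_val_five, cons_val_two6, cons_val_three6, cons_val_four6] at h ⊢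
          first | exact h | linarith
    have hcard : Fintype.card (Fin 6) = Module.finrank ℝ V := by simp
    let b : Basis (Fin 6) ℝ V := basisOfLinearIndependentOfCardEqFinrank hli hcard
    have hb : ∀ i, b i = v i := by
      intro i
      rw [show b = basisOfLinearIndependentOfCardEqFinrank hli hcard from rfl,
        coe_basisOfLinearIndependentOfCardEqFinrank]
    refine ⟨b, ?_, ?_, ?_⟩
    · intro i j hij
      rw [hb, hb, hmat, if_neg hij]
    · have hpos : ∀ i : Fin 6, (0 < g (b i) (b i)) ↔ (i = 0 ∨ i = 1 ∨ i = 2) := by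
        intro i
        rw [hb, hmat, if_pos rfl]
        fin_cases i <;> norm_num (config := { decide := true }) [cons_val_five]
      rw [Nat.card_congr (Equiv.subtypeEquivRight hpos), Nat.card_eq_fintype_card]
      decide
    · have hneg : ∀ i : Fin 6, (g (b i) (b i) < 0) ↔ (i = 3 ∨ i = 4 ∨ i = 5) := by
        intro i
        rw [hb, hmat, if_pos rfl]
        fin_cases i <;> norm_num (config := { decide := true }) [cons_val_five]
      rw [Nat.card_congr (Equiv.subtypeEquivRight hneg), Nat.card_eq_fintype_card]
      decide
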